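/- Let z : ℝ → ℝ be a C² L-periodic function. Then for every x ∈ ℝ, |z'(x)| ≤ (sup_{y ∈ [0,L]} |z'(y)² + z(y) z''(y)|)^{1/2}. -/

import Mathlib

open MeasureTheory

theorem stmt2 (L : ℝ) (hL : 0 < L) (z : ℝ → ℝ) (hz : ContDiff ℝ 2 z)
    (hper : Function.Periodic z L) (x : ℝ) :
    |deriv z x| ≤
      Real.sqrt (sSup ((fun y => |(deriv z y) ^ 2 + z y * deriv (deriv z) y|) '' Set.Icc 0 L)) := by
  have h2 : ContDiff ℝ 1 (deriv z) := by
    have := (contDiff_succ_iff_deriv (n := 1)).mp (by exact_mod_cast hz)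
    exact this.2.2
  have hd2 : Differentiable ℝ (deriv z) := h2.differentiable one_ne_zero
  have hcont1 : Continuous (deriv z) := hd2.continuous
  have hcont2 : Continuous (deriv (deriv z)) := h2.continuous_deriv le_rfl
  have hperd : Function.Periodic (deriv z) L := by
    intro y
    have : (fun t => z (t + L)) = z := funext hper
    calc deriv z (y + L) = deriv (fun t => z (t + L)) y := (deriv_comp_add_const z L y).symm
    _ = deriv z y := by rw [this]
  set f : ℝ → ℝ := fun y => |(deriv z y) ^ 2 + z y * deriv (deriv z) y| with hf
  have hfc : Continuous f := ((hcont1.pow 2).add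
    ((hz.continuous).mul hcont2)).abs
  have hbdd : BddAbove (f '' Set.Icc 0 L) :=
    (isCompact_Icc.image hfc).bddAbove
  set S : ℝ := sSup (f '' Set.Icc 0 L) with hS
  -- any point's deriv value equals one in [0, L]
  have key : ∀ p : ℝ, ∃ q ∈ Set.Icc (0:ℝ) L, deriv z p = deriv z q := by
    intro p
    refine ⟨p - ⌊p / L⌋ * L, ⟨?_, ?_⟩, ?_⟩
    · exact sub_nonneg.mpr ((le_div_iff₀ hL).mp (Int.floor_le _))
    · have := Int.sub_floor_div_mul_lt p hL
      linarith
    · exact (hperd.sub_int_mul_eq ⌊p / L⌋).symm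
  -- global max/min points
  obtain ⟨a, ha, hamax⟩ := isCompact_Icc.exists_isMaxOn (Set.nonempty_Icc.mpr hL.le)
    hcont1.continuousOn
  obtain ⟨b, hb, hbmin⟩ := isCompact_Icc.exists_isMinOn (Set.nonempty_Icc.mpr hL.le)
    hcont1.continuousOn
  have hamax' : ∀ p, deriv z p ≤ deriv z a := by
    intro p; obtain ⟨q, hq, he⟩ := key p; rw [he]; exact hamax hq
  have hbmin' : ∀ p, deriv z b ≤ deriv z p := by
    intro p; obtain ⟨q, hq, he⟩ := key p; rw [he]; exact hbmin hq
  have hda : deriv (deriv z) a = 0 :=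
    IsLocalMax.deriv_eq_zero (Filter.Eventually.of_forall hamax')
  have hdb : deriv (deriv z) b = 0 :=
    IsLocalMin.deriv_eq_zero (Filter.Eventually.of_forall hbmin')
  have hsq : ∀ c ∈ Set.Icc (0:ℝ) L, deriv (deriv z) c = 0 → |deriv z c| ≤ Real.sqrt S := by
    intro c hc hdc
    have hmem : (deriv z c) ^ 2 ≤ S := by
      have : f c = (deriv z c) ^ 2 := by
        simp [hf, hdc, abs_of_nonneg (sq_nonneg (deriv z c))]
      rw [← this]
      exact le_csSup hbdd ⟨c, hc, rfl⟩
    exact Real.abs_le_sqrt hmem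
  have hSa := hsq a ha hda
  have hSb := hsq b hb hdb
  rw [abs_le]
  constructor
  · have := hbmin' x
    have h2 := neg_abs_le (deriv z b)
    linarith
  · have := hamax' x
    have h2 := le_abs_self (deriv z a)
    linarith
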